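/- There exists a transitive set M of ordinal height ω + ω that is a model of Zermelo set theory (extensionality, pairing, union, powerset, infinity, separation, foundation) such that M satisfies 'for every ordinal α, V_α exists', but M is not the union of its von Neumann hierarchy; that is, M contains an element not belonging to any V_α^M. (Such an M can be obtained by closing V_{ω+ω} ∪ {Z(ω+ω)} under pairing, union, subsets, and powersets in ω many steps, where Z is the Zermelo ordinal function: Z(0) = ∅, Z(α+1) = {Z(α)}, Z(λ) = {Z(α) : α < λ}.) -/

import Mathlib

open Ordinal

namespace ZM
open ZFSet

attribute [local instance] Classical.allZFSetDefinable
attribute [local instance] Classical.propDecidable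

/-- von Neumann numerals -/
def numeral : ℕ → ZFSet
  | 0 => ∅
  | n + 1 => insert (numeral n) (numeral n)

theorem mk_ofNat (n : ℕ) : ZFSet.mk (PSet.ofNat n) = numeral n := by
  induction n with
  | zero => rfl
  | succ n ih =>
    show insert (ZFSet.mk (PSet.ofNat n)) (ZFSet.mk (PSet.ofNat n)) = _
    rw [ih]; rfl

theorem mem_omega {x : ZFSet} : x ∈ ZFSet.omega ↔ ∃ n : ℕ, x = numeral n := by
  constructor
  · exact Quotient.inductionOn x fun a ⟨⟨n⟩, h⟩ =>
      ⟨n, by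
        have : ZFSet.mk a = ZFSet.mk (PSet.ofNat n) := ZFSet.sound h
        rw [show (Quotient.mk _ a : ZFSet) = ZFSet.mk a from rfl, this, mk_ofNat]⟩
  · rintro ⟨n, rfl⟩
    induction n with
    | zero => exact ZFSet.omega_zero
    | succ n ih => exact ZFSet.omega_succ ih

theorem rank_numeral (n : ℕ) : rank (numeral n) = n := by
  induction n with
  | zero => simp [numeral]
  | succ n ih =>
    show rank (insert (numeral n) (numeral n)) = _
    rw [rank_insert, ih, max_eq_left (Order.le_succ _), Nat.cast_succ, Ordinal.add_one_eq_succ]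

theorem rank_omega : rank ZFSet.omega = omega0 := by
  apply le_antisymm
  · rw [rank_le_iff]
    intro y hy
    obtain ⟨n, rfl⟩ := mem_omega.1 hy
    rw [rank_numeral]
    exact nat_lt_omega0 n
  · rw [omega0_le]
    intro n
    have : numeral n ∈ ZFSet.omega := mem_omega.2 ⟨n, rfl⟩
    simpa [rank_numeral] using (rank_lt_of_mem this).le


noncomputable def Vfin (n : ℕ) : ZFSet := ZFSet.powerset^[n] ∅

universe u

noncomputable def Vom : ZFSet.{u} := ⋃₀ ZFSet.range (Vfin : ℕ → ZFSet.{u})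

noncomputable def Von (n : ℕ) : ZFSet := ZFSet.powerset^[n] Vom

noncomputable def Voo : ZFSet.{u} := ⋃₀ ZFSet.range (Von : ℕ → ZFSet.{u})

theorem mem_Vfin {x : ZFSet} {n : ℕ} : x ∈ Vfin n ↔ rank x < n := by
  induction n generalizing x with
  | zero => simp [Vfin, ZFSet.notMem_empty]
  | succ n ih =>
    rw [Vfin, Function.iterate_succ_apply', ZFSet.mem_powerset]
    constructor
    · intro h
      have : rank x ≤ n := rank_le_iff.2 fun y hy => ih.1 (h hy)
      calc rank x ≤ (n : Ordinal) := this
        _ < ((n+1 : ℕ) : Ordinal) := by rw [Nat.cast_succ]; exact lt_add_one _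
    · intro h y hy
      apply ih.2
      have : rank x ≤ n := by
        rwa [Nat.cast_succ, Ordinal.add_one_eq_succ, Order.lt_succ_iff] at h
      exact lt_of_lt_of_le (rank_lt_of_mem hy) this

theorem mem_Vom {x : ZFSet} : x ∈ Vom ↔ rank x < omega0 := by
  rw [Vom, ZFSet.mem_sUnion]
  constructor
  · rintro ⟨z, hz, hx⟩
    obtain ⟨n, rfl⟩ := ZFSet.mem_range.1 hz
    exact (mem_Vfin.1 hx).trans (nat_lt_omega0 n)
  · intro h
    obtain ⟨n, hn⟩ := lt_omega0.1 h
    exact ⟨Vfin (n+1), ZFSet.mem_range.2 ⟨n+1, rfl⟩, mem_Vfin.2 (by rw [hn, Nat.cast_succ]; exact lt_add_one _)⟩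

theorem mem_Von {x : ZFSet} {n : ℕ} : x ∈ Von n ↔ rank x < omega0 + n := by
  induction n generalizing x with
  | zero => simpa [Von] using mem_Vom
  | succ n ih =>
    rw [Von, Function.iterate_succ_apply', ZFSet.mem_powerset]
    constructor
    · intro h
      have : rank x ≤ omega0 + n := rank_le_iff.2 fun y hy => ih.1 (h hy)
      calc rank x ≤ omega0 + n := this
        _ < omega0 + ((n+1 : ℕ) : Ordinal) := by
              rw [Nat.cast_succ, ← add_assoc]; exact lt_add_one _
    · intro h y hy
      apply ih.2
      have : rank x ≤ omega0 + n := by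
        rwa [Nat.cast_succ, ← add_assoc, Ordinal.add_one_eq_succ, Order.lt_succ_iff] at h
      exact lt_of_lt_of_le (rank_lt_of_mem hy) this

theorem mem_Voo {x : ZFSet} : x ∈ Voo ↔ rank x < omega0 + omega0 := by
  rw [Voo, ZFSet.mem_sUnion]
  constructor
  · rintro ⟨z, hz, hx⟩
    obtain ⟨n, rfl⟩ := ZFSet.mem_range.1 hz
    exact (mem_Von.1 hx).trans ((add_lt_add_iff_left _).2 (nat_lt_omega0 n))
  · intro h
    obtain ⟨d, hd, hle⟩ := (lt_add_iff omega0_ne_zero).1 h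
    obtain ⟨n, rfl⟩ := lt_omega0.1 hd
    refine ⟨Von (n+1), ZFSet.mem_range.2 ⟨n+1, rfl⟩, mem_Von.2 ?_⟩
    calc rank x ≤ omega0 + n := hle
      _ < omega0 + ((n+1 : ℕ) : Ordinal) := by rw [Nat.cast_succ, ← add_assoc]; exact lt_add_one _

/-- hereditary ordinal bound -/
noncomputable def oht : ZFSet → Ordinal :=
  ZFSet.mem_wf.fix fun x IH =>
    (if x.IsOrdinal then rank x + 1 else 0) ⊔ ⨆ y : x.toSet, IH y.1 y.2

theorem oht_def (x : ZFSet) :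
    oht x = (if x.IsOrdinal then rank x + 1 else 0) ⊔ ⨆ y : x.toSet, oht y.1 := by
  rw [oht, WellFounded.fix_eq]

theorem le_oht_of_mem {x y : ZFSet} (h : y ∈ x) : oht y ≤ oht x := by
  rw [oht_def x]
  have hs : Small ↑x.toSet := ZFSet.small_coe x
  exact le_trans (Ordinal.le_iSup (fun z : x.toSet => oht z.1) ⟨y, h⟩) le_sup_right

theorem rank_lt_oht {x : ZFSet} (h : x.IsOrdinal) : rank x < oht x := by
  rw [oht_def]
  calc rank x < rank x + 1 := lt_add_one _
    _ ≤ _ := le_trans (le_of_eq (if_pos h).symm) le_sup_left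

theorem oht_le {x : ZFSet} {a : Ordinal} (h1 : x.IsOrdinal → rank x + 1 ≤ a)
    (h2 : ∀ y ∈ x, oht y ≤ a) : oht x ≤ a := by
  rw [oht_def]
  apply _root_.sup_le
  · split_ifs with h
    · exact h1 h
    · exact zero_le
  · exact Ordinal.iSup_le fun y => h2 y.1 y.2

theorem oht_le_rank_succ (x : ZFSet) : oht x ≤ rank x + 1 := by
  induction x using ZFSet.inductionOn with
  | _ x ih =>
    refine oht_le (fun _ => le_rfl) fun y hy => (ih y hy).trans ?_
    have := rank_lt_of_mem hy
    calc rank y + 1 ≤ rank x := by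
          rwa [Ordinal.add_one_eq_succ, Order.succ_le_iff]
      _ ≤ rank x + 1 := le_of_lt (lt_add_one _)

theorem isOrdinal_mem {x y : ZFSet} (hx : x.IsOrdinal) (hy : y ∈ x) : y.IsOrdinal := by
  constructor
  · intro z hz w hw
    exact hx.mem_trans' hw hz hy
  · intro a b c hab hbc hcy
    exact hx.mem_trans' hab hbc (hx.isTransitive.mem_trans hcy hy)

theorem rank_le_of_isOrdinal {x : ZFSet} {a : Ordinal} (h : x.IsOrdinal)
    (h2 : ∀ y ∈ x, oht y ≤ a) : rank x ≤ a :=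
  rank_le_iff.2 fun y hy => lt_of_lt_of_le (rank_lt_oht (isOrdinal_mem h hy)) (h2 y hy)


noncomputable def W : ℕ → ZFSet
  | 0 => ZFSet.omega
  | n + 1 => {W n}

noncomputable def zet : ZFSet.{u} := ZFSet.range (W : ℕ → ZFSet.{u})

theorem W_ne_empty (n : ℕ) : W n ≠ ∅ := by
  cases n with
  | zero => exact fun h => ZFSet.notMem_empty ∅ (h ▸ ZFSet.omega_zero)
  | succ n => exact fun h => ZFSet.notMem_empty (W n) (h ▸ ZFSet.mem_singleton.2 rfl)

theorem rank_W (n : ℕ) : rank (W n) = omega0 + n := by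
  induction n with
  | zero => simp [W, rank_omega]
  | succ n ih =>
    show rank ({W n} : ZFSet) = _
    rw [rank_singleton, ih, Nat.cast_succ, ← add_assoc, Ordinal.add_one_eq_succ]

theorem le_rank_zet : omega0 + omega0 ≤ rank zet.{u} := by
  apply le_of_forall_lt
  intro c hc
  obtain ⟨d, hd, hle⟩ := (lt_add_iff omega0_ne_zero).1 hc
  obtain ⟨n, rfl⟩ := lt_omega0.1 hd
  have h1 : W (n+1) ∈ zet.{u} := ZFSet.mem_range.2 ⟨n+1, rfl⟩
  have h2 : rank (W (n+1)) ≤ rank zet := le_of_lt (rank_lt_of_mem h1)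
  calc c ≤ omega0 + n := hle
    _ < omega0 + (n+1 : ℕ) := by rw [Nat.cast_succ, ← add_assoc]; exact lt_add_one _
    _ = rank (W (n+1)) := (rank_W (n+1)).symm
    _ ≤ rank zet := h2

theorem not_isOrdinal_singleton {a : ZFSet} (h : a ≠ ∅) : ¬ ZFSet.IsOrdinal {a} := by
  intro ho
  obtain ⟨b, hb⟩ : ∃ b, b ∈ a := by
    by_contra hc
    push_neg at hc
    exact h ((ZFSet.eq_empty a).2 hc)
  have ha : a ∈ ({a} : ZFSet) := ZFSet.mem_singleton.2 rfl
  have : b ∈ ({a} : ZFSet) := ho.isTransitive.mem_trans hb ha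
  have : a ∈ a := ZFSet.mem_singleton.1 this ▸ hb
  exact ZFSet.mem_irrefl a this

theorem not_isOrdinal_zet : ¬ ZFSet.IsOrdinal zet.{u} := by
  intro ho
  have h0 : ZFSet.omega ∈ zet.{u} := ZFSet.mem_range.2 ⟨0, rfl⟩
  have : (∅ : ZFSet) ∈ zet := ho.isTransitive.mem_trans ZFSet.omega_zero h0
  obtain ⟨n, hn⟩ := ZFSet.mem_range.1 this
  exact W_ne_empty n hn



/-! ### The model -/

noncomputable def Mst : ℕ → ZFSet
  | 0 => insert zet Voo
  | n + 1 => Mst n ∪ ZFSet.image ZFSet.powerset (Mst n)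
      ∪ ⋃₀ (ZFSet.image ZFSet.powerset (Mst n))
      ∪ ⋃₀ (ZFSet.image (fun a => ZFSet.image (fun b => ({a, b} : ZFSet)) (Mst n)) (Mst n))
      ∪ ZFSet.image ZFSet.sUnion (Mst n)

theorem mem_Mst_zero {x : ZFSet} : x ∈ Mst 0 ↔ x = zet ∨ x ∈ Voo := by
  show x ∈ insert zet Voo ↔ _
  exact ZFSet.mem_insert_iff

theorem Mst_subset_succ {n : ℕ} : Mst n ⊆ Mst (n+1) := by
  intro x hx
  show x ∈ _ ∪ _ ∪ _ ∪ _ ∪ _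
  simp only [ZFSet.mem_union]
  tauto

theorem powerset_mem_succ {t : ZFSet} {n : ℕ} (ht : t ∈ Mst n) :
    ZFSet.powerset t ∈ Mst (n+1) := by
  show _ ∈ _ ∪ _ ∪ _ ∪ _ ∪ _
  simp only [ZFSet.mem_union]
  exact Or.inl (Or.inl (Or.inl (Or.inr (ZFSet.mem_image.2 ⟨t, ht, rfl⟩))))

theorem subset_mem_succ {t x : ZFSet} {n : ℕ} (ht : t ∈ Mst n) (hx : x ⊆ t) :
    x ∈ Mst (n+1) := by
  show _ ∈ _ ∪ _ ∪ _ ∪ _ ∪ _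
  simp only [ZFSet.mem_union]
  refine Or.inl (Or.inl (Or.inr (ZFSet.mem_sUnion.2 ⟨ZFSet.powerset t, ?_, ?_⟩)))
  · exact ZFSet.mem_image.2 ⟨t, ht, rfl⟩
  · exact ZFSet.mem_powerset.2 hx

theorem pair_mem_succ {a b : ZFSet} {n : ℕ} (ha : a ∈ Mst n) (hb : b ∈ Mst n) :
    ({a, b} : ZFSet) ∈ Mst (n+1) := by
  show _ ∈ _ ∪ _ ∪ _ ∪ _ ∪ _
  simp only [ZFSet.mem_union]
  refine Or.inl (Or.inr (ZFSet.mem_sUnion.2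
    ⟨ZFSet.image (fun b => ({a, b} : ZFSet)) (Mst n), ?_, ?_⟩))
  · exact ZFSet.mem_image.2 ⟨a, ha, rfl⟩
  · exact ZFSet.mem_image.2 ⟨b, hb, rfl⟩

theorem sUnion_mem_succ {t : ZFSet} {n : ℕ} (ht : t ∈ Mst n) :
    (⋃₀ t : ZFSet) ∈ Mst (n+1) := by
  show _ ∈ _ ∪ _ ∪ _ ∪ _ ∪ _
  simp only [ZFSet.mem_union]
  exact Or.inr (ZFSet.mem_image.2 ⟨t, ht, rfl⟩)

theorem mem_Mst_succ_elim {x : ZFSet} {n : ℕ} (h : x ∈ Mst (n+1)) :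
    x ∈ Mst n ∨ (∃ t ∈ Mst n, x = ZFSet.powerset t) ∨ (∃ t ∈ Mst n, x ⊆ t)
    ∨ (∃ a ∈ Mst n, ∃ b ∈ Mst n, x = ({a, b} : ZFSet)) ∨ (∃ t ∈ Mst n, x = (⋃₀ t : ZFSet)) := by
  have h' : x ∈ _ ∪ _ ∪ _ ∪ _ ∪ _ := h
  rcases ZFSet.mem_union.1 h' with h4 | h5
  rotate_left
  · obtain ⟨t, ht, rfl⟩ := ZFSet.mem_image.1 h5
    exact Or.inr (Or.inr (Or.inr (Or.inr ⟨t, ht, rfl⟩)))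
  rcases ZFSet.mem_union.1 h4 with h3 | h5
  rotate_left
  · obtain ⟨w, hw, hxw⟩ := ZFSet.mem_sUnion.1 h5
    obtain ⟨a, ha, rfl⟩ := ZFSet.mem_image.1 hw
    obtain ⟨b, hb, rfl⟩ := ZFSet.mem_image.1 hxw
    exact Or.inr (Or.inr (Or.inr (Or.inl ⟨a, ha, b, hb, rfl⟩)))
  rcases ZFSet.mem_union.1 h3 with h2 | h5
  rotate_left
  · obtain ⟨w, hw, hxw⟩ := ZFSet.mem_sUnion.1 h5
    obtain ⟨t, ht, rfl⟩ := ZFSet.mem_image.1 hw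
    exact Or.inr (Or.inr (Or.inl ⟨t, ht, ZFSet.mem_powerset.1 hxw⟩))
  rcases ZFSet.mem_union.1 h2 with h1 | h5
  · exact Or.inl h1
  · obtain ⟨t, ht, rfl⟩ := ZFSet.mem_image.1 h5
    exact Or.inr (Or.inl ⟨t, ht, rfl⟩)

theorem Mst_transitive (n : ℕ) : (Mst n).IsTransitive := by
  induction n with
  | zero =>
    intro y hy w hw
    rcases mem_Mst_zero.1 hy with rfl | hy
    · obtain ⟨m, rfl⟩ := ZFSet.mem_range.1 hw
      refine mem_Mst_zero.2 (Or.inr (mem_Voo.2 ?_))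
      rw [rank_W]
      exact (add_lt_add_iff_left _).2 (nat_lt_omega0 m)
    · exact mem_Mst_zero.2 (Or.inr (mem_Voo.2
        ((rank_lt_of_mem hw).trans (mem_Voo.1 hy))))
  | succ n ih =>
    intro y hy w hw
    rcases mem_Mst_succ_elim hy with h | ⟨t, ht, rfl⟩ | ⟨t, ht, hsub⟩ | ⟨a, ha, b, hb, rfl⟩ | ⟨t, ht, rfl⟩
    · exact Mst_subset_succ (ih y h hw)
    · exact subset_mem_succ ht (ZFSet.mem_powerset.1 hw)
    · exact Mst_subset_succ (ih t ht (hsub hw))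
    · rcases ZFSet.mem_pair.1 hw with rfl | rfl
      · exact Mst_subset_succ ha
      · exact Mst_subset_succ hb
    · obtain ⟨e, he, hwe⟩ := ZFSet.mem_sUnion.1 hw
      exact Mst_subset_succ (ih e (ih t ht he) hwe)

/-! invariant -/


theorem oo_isLimit : Order.IsSuccLimit (omega0 + omega0) := isSuccLimit_add _ isSuccLimit_omega0

theorem add_one_lt_oo {a : Ordinal} (h : a < omega0 + omega0) : a + 1 < omega0 + omega0 := by
  rw [Ordinal.add_one_eq_succ]
  exact oo_isLimit.succ_lt h

theorem oht_subset {x t : ZFSet} (h : x ⊆ t) : oht x ≤ oht t + 1 := by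
  apply oht_le
  · intro ho
    exact add_le_add_left
      (rank_le_of_isOrdinal ho fun y hy => le_oht_of_mem (h hy)) 1
  · intro y hy
    exact (le_oht_of_mem (h hy)).trans (le_of_lt (lt_add_one _))

theorem oht_powerset {t : ZFSet} : oht (ZFSet.powerset t) ≤ oht t + 1 + 1 := by
  apply oht_le
  · intro ho
    have hto : t.IsOrdinal := isOrdinal_mem ho (ZFSet.mem_powerset.2 fun _ h => h)
    rw [rank_powerset, ← Ordinal.add_one_eq_succ]
    exact add_le_add_left (add_le_add_left (le_of_lt (rank_lt_oht hto)) 1) 1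
  · intro y hy
    exact (oht_subset (ZFSet.mem_powerset.1 hy)).trans (le_of_lt (lt_add_one _))

theorem oht_pair {a b : ZFSet} : oht ({a, b} : ZFSet) ≤ max (oht a) (oht b) + 1 := by
  apply oht_le
  · intro ho
    have ha : a.IsOrdinal := isOrdinal_mem ho (ZFSet.mem_pair.2 (Or.inl rfl))
    have hb : b.IsOrdinal := isOrdinal_mem ho (ZFSet.mem_pair.2 (Or.inr rfl))
    rw [rank_pair, ← Ordinal.add_one_eq_succ, ← Ordinal.add_one_eq_succ]
    apply add_le_add_left
    apply max_le
    · exact le_max_of_le_left (by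
        rw [Ordinal.add_one_eq_succ, Order.succ_le_iff]; exact rank_lt_oht ha)
    · exact le_max_of_le_right (by
        rw [Ordinal.add_one_eq_succ, Order.succ_le_iff]; exact rank_lt_oht hb)
  · intro y hy
    rcases ZFSet.mem_pair.1 hy with rfl | rfl
    · exact (le_max_left _ _).trans (le_of_lt (lt_add_one _))
    · exact (le_max_right _ _).trans (le_of_lt (lt_add_one _))

theorem oht_sUnion {t : ZFSet} : oht (⋃₀ t : ZFSet) ≤ oht t + 1 := by
  have hmem : ∀ y ∈ (⋃₀ t : ZFSet), oht y ≤ oht t := by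
    intro y hy
    obtain ⟨e, he, hye⟩ := ZFSet.mem_sUnion.1 hy
    exact (le_oht_of_mem hye).trans (le_oht_of_mem he)
  apply oht_le
  · intro ho
    exact add_le_add_left (rank_le_of_isOrdinal ho hmem) 1
  · intro y hy
    exact (hmem y hy).trans (le_of_lt (lt_add_one _))

theorem oht_W_le (m : ℕ) : oht (W m) ≤ omega0 + 1 := by
  induction m with
  | zero =>
    refine (oht_le_rank_succ _).trans ?_
    show rank ZFSet.omega + 1 ≤ _
    rw [rank_omega]
  | succ m ih =>
    apply oht_le
    · intro ho
      exact absurd ho (not_isOrdinal_singleton (W_ne_empty m))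
    · intro y hy
      have : y = W m := ZFSet.mem_singleton.1 hy
      rw [this]
      exact ih

theorem oht_Mst : ∀ n, ∀ x ∈ Mst.{u} n, oht x < omega0 + omega0 := by
  intro n
  induction n with
  | zero =>
    intro x hx
    rcases mem_Mst_zero.1 hx with rfl | hx
    · have h1 : oht zet.{u} ≤ omega0 + 1 := by
        apply oht_le
        · intro ho
          exact absurd ho not_isOrdinal_zet
        · intro y hy
          obtain ⟨m, rfl⟩ := ZFSet.mem_range.1 hy
          exact oht_W_le m
      exact h1.trans_lt ((add_lt_add_iff_left _).2 one_lt_omega0)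
    · exact (oht_le_rank_succ x).trans_lt (add_one_lt_oo (mem_Voo.1 hx))
  | succ n ih =>
    intro x hx
    rcases mem_Mst_succ_elim hx with h | ⟨t, ht, rfl⟩ | ⟨t, ht, hs⟩ | ⟨a, ha, b, hb, rfl⟩ |
      ⟨t, ht, rfl⟩
    · exact ih x h
    · exact lt_of_le_of_lt oht_powerset (add_one_lt_oo (add_one_lt_oo (ih t ht)))
    · exact lt_of_le_of_lt (oht_subset hs) (add_one_lt_oo (ih t ht))
    · exact lt_of_le_of_lt oht_pair (add_one_lt_oo (max_lt (ih a ha) (ih b hb)))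
    · exact lt_of_le_of_lt oht_sUnion (add_one_lt_oo (ih t ht))

/-! ### The union model -/

noncomputable def MM : ZFSet.{u} := ⋃₀ ZFSet.range (Mst : ℕ → ZFSet.{u})

theorem mem_MM {x : ZFSet} : x ∈ MM ↔ ∃ n, x ∈ Mst n := by
  rw [MM, ZFSet.mem_sUnion]
  constructor
  · rintro ⟨z, hz, hx⟩
    obtain ⟨n, rfl⟩ := ZFSet.mem_range.1 hz
    exact ⟨n, hx⟩
  · rintro ⟨n, hx⟩
    exact ⟨Mst n, ZFSet.mem_range.2 ⟨n, rfl⟩, hx⟩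

theorem Mst_mono {m n : ℕ} (h : m ≤ n) : Mst m ⊆ Mst n := by
  induction h with
  | refl => exact fun _ h => h
  | step _ ih => exact fun x hx => Mst_subset_succ (ih hx)

theorem Voo_subset_MM {x : ZFSet} (h : rank x < omega0 + omega0) : x ∈ MM :=
  mem_MM.2 ⟨0, mem_Mst_zero.2 (Or.inr (mem_Voo.2 h))⟩

theorem rank_lt_oo_of_mem_MM {a : ZFSet} (hmem : a ∈ MM) (hord : a.IsOrdinal) :
    rank a < omega0 + omega0 := by
  obtain ⟨n, hn⟩ := mem_MM.1 hmem
  exact (rank_lt_oht hord).trans (oht_Mst n a hn)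

theorem rank_Vom_le : rank Vom ≤ omega0 := by
  rw [rank_le_iff]
  intro y hy
  exact mem_Vom.1 hy

theorem rank_Von_le (n : ℕ) : rank (Von n) ≤ omega0 + n := by
  induction n with
  | zero => simpa [Von] using rank_Vom_le
  | succ n ih =>
    rw [Von, Function.iterate_succ_apply', rank_powerset, ← Ordinal.add_one_eq_succ,
      Nat.cast_succ, ← add_assoc]
    exact add_le_add_left ih 1

end ZM

open ZM

/-- There is a transitive set `M` of ordinal height `ω + ω` which is a model of
Zermelo set theory (extensionality and foundation hold automatically for
transitive sets; `M` contains `∅` and `ω` and satisfies pairing, union,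
powerset, and separation) and which satisfies "for every ordinal `α`, `V_α`
exists" (here `V_α^M = {z ∈ M | rank z < α}`, which is the correct
von Neumann hierarchy of `M` since `M` is transitive), but `M` is not the
union of its von Neumann hierarchy: some element of `M` belongs to no
`V_α^M`. -/
theorem exists_zermelo_model_not_union_of_hierarchy :
    ∃ M : ZFSet,
      M.IsTransitive ∧
      (∅ : ZFSet) ∈ M ∧
      ZFSet.omega ∈ M ∧
      (∀ x ∈ M, ∀ y ∈ M, ({x, y} : ZFSet) ∈ M) ∧
      (∀ x ∈ M, (ZFSet.sUnion x : ZFSet) ∈ M) ∧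
      (∀ x ∈ M, ∃ p ∈ M, ∀ z ∈ M, (z ∈ p ↔ z ⊆ x)) ∧
      (∀ x ∈ M, ∀ Φ : ZFSet → Prop, x.sep Φ ∈ M) ∧
      (∀ α : ZFSet, α.IsOrdinal →
        (α ∈ M ↔ ZFSet.rank α < omega0 + omega0)) ∧
      (∀ a ∈ M, a.IsOrdinal →
        ∃ v ∈ M, ∀ z : ZFSet, z ∈ v ↔ z ∈ M ∧ ZFSet.rank z < ZFSet.rank a) ∧
      (∃ z ∈ M, ∀ a ∈ M, a.IsOrdinal → ¬ ZFSet.rank z < ZFSet.rank a) := by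
  refine ⟨MM, ?_, ?_, ?_, ?_, ?_, ?_, ?_, ?_, ?_, ?_⟩
  · -- transitivity
    intro y hy w hw
    obtain ⟨n, hn⟩ := mem_MM.1 hy
    exact mem_MM.2 ⟨n, Mst_transitive n y hn hw⟩
  · -- empty
    apply Voo_subset_MM
    rw [ZFSet.rank_empty]
    exact oo_isLimit.pos
  · -- omega
    apply Voo_subset_MM
    rw [rank_omega]
    simpa using (add_lt_add_iff_left omega0).2 omega0_pos
  · -- pairing
    intro x hx y hy
    obtain ⟨n, hn⟩ := mem_MM.1 hx
    obtain ⟨m, hm⟩ := mem_MM.1 hy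
    exact mem_MM.2 ⟨max n m + 1,
      pair_mem_succ (Mst_mono (le_max_left n m) hn) (Mst_mono (le_max_right n m) hm)⟩
  · -- union
    intro x hx
    obtain ⟨n, hn⟩ := mem_MM.1 hx
    exact mem_MM.2 ⟨n + 1, sUnion_mem_succ hn⟩
  · -- powerset
    intro x hx
    obtain ⟨n, hn⟩ := mem_MM.1 hx
    exact ⟨ZFSet.powerset x, mem_MM.2 ⟨n + 1, powerset_mem_succ hn⟩,
      fun z _ => ZFSet.mem_powerset⟩
  · -- separation
    intro x hx Φ
    obtain ⟨n, hn⟩ := mem_MM.1 hx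
    exact mem_MM.2 ⟨n + 1, subset_mem_succ hn fun z hz => (ZFSet.mem_sep.1 hz).1⟩
  · -- ordinals of MM are exactly those of rank < ω + ω
    intro α hα
    exact ⟨fun h => rank_lt_oo_of_mem_MM h hα, fun h => Voo_subset_MM h⟩
  · -- V_α exists
    intro a ha hord
    have hya : ZFSet.rank a < omega0 + omega0 := rank_lt_oo_of_mem_MM ha hord
    obtain ⟨d, hd, hle⟩ := (lt_add_iff omega0_ne_zero).1 hya
    obtain ⟨n, rfl⟩ := lt_omega0.1 hd
    have hVonM : Von n ∈ Mst 0 :=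
      mem_Mst_zero.2 (Or.inr (mem_Voo.2 ((rank_Von_le n).trans_lt
        ((add_lt_add_iff_left _).2 (nat_lt_omega0 n)))))
    refine ⟨(Von n).sep (fun z => ZFSet.rank z < ZFSet.rank a),
      mem_MM.2 ⟨1, subset_mem_succ hVonM fun z hz => (ZFSet.mem_sep.1 hz).1⟩, ?_⟩
    intro z
    rw [ZFSet.mem_sep]
    constructor
    · rintro ⟨hz1, hz2⟩
      exact ⟨Voo_subset_MM ((mem_Von.1 hz1).trans
        ((add_lt_add_iff_left _).2 (nat_lt_omega0 n))), hz2⟩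
    · rintro ⟨_, hz2⟩
      exact ⟨mem_Von.2 (hz2.trans_le hle), hz2⟩
  · -- the witness
    refine ⟨zet, mem_MM.2 ⟨0, mem_Mst_zero.2 (Or.inl rfl)⟩, ?_⟩
    intro a ha hord
    exact not_lt.2 (le_of_lt ((rank_lt_oo_of_mem_MM ha hord).trans_le le_rank_zet))
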